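/- arXiv:1612.06057 — 4 statements merged into one kernel-verified Lean document; each statement's English description precedes it below -/
import Mathlib

section
/- Let u, v ∈ {0,1}^d with d_H(u, v) ≥ 4r for an integer r ≥ 2, and compress them with BCS using N = 8r² buckets chosen uniformly and independently per coordinate. Then E[d_H(u', v')] > 2r. -/
open Finset

private lemma one_sub_pow_le_quad (x : ℝ) (hx0 : 0 ≤ x) (hx1 : x ≤ 1) (n : ℕ) :
    (1 - x) ^ n ≤ 1 - n * x + n * ((n : ℝ) - 1) / 2 * x ^ 2 := by
  induction n with
  | zero => simp
  | succ n ih =>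
    have h1 : (0:ℝ) ≤ 1 - x := by linarith
    have hn : (0:ℝ) ≤ (n : ℝ) * ((n : ℝ) - 1) := by
      rcases Nat.eq_zero_or_pos n with h | h
      · simp [h]
      · have : (1:ℝ) ≤ (n : ℝ) := by exact_mod_cast h
        nlinarith
    have h3 : (1 - x) ^ n * (1 - x) ≤ (1 - n * x + n * ((n:ℝ) - 1) / 2 * x ^ 2) * (1 - x) :=
      mul_le_mul_of_nonneg_right ih h1
    have h4 : (0:ℝ) ≤ (n : ℝ) * ((n : ℝ) - 1) * x ^ 2 * x :=
      mul_nonneg (mul_nonneg hn (sq_nonneg x)) hx0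
    rw [pow_succ]
    push_cast
    nlinarith

/-- If `d_H(u, v) ≥ 4r` for an integer `r ≥ 2` and BCS uses `N = 8r²` uniformly random
independent buckets, then the expected compressed Hamming distance exceeds `2r`. -/
theorem bcs_expected_hammingDist_gt (d N r : ℕ) (hr : 2 ≤ r) (hN : N = 8 * r ^ 2)
    (u v : Fin d → ZMod 2) (hdist : 4 * r ≤ hammingDist u v) :
    (∑ b : Fin d → Fin N,
        (hammingDist
          (fun j : Fin N => ∑ i ∈ Finset.univ.filter (fun i => b i = j), u i)
          (fun j : Fin N => ∑ i ∈ Finset.univ.filter (fun i => b i = j), v i) : ℝ)) /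
        (Fintype.card (Fin d → Fin N) : ℝ) > 2 * (r : ℝ) := by
  classical
  set ψ : ℕ := hammingDist u v with hψ
  set cnt : (Fin d → Fin N) → Fin N → ℕ :=
    fun b j => (Finset.univ.filter (fun i => b i = j ∧ u i ≠ v i)).card with hcnt
  -- Step A: for each bucket assignment, the compressed Hamming distance counts odd buckets
  have stepA : ∀ b : Fin d → Fin N,
      (hammingDist
          (fun j : Fin N => ∑ i ∈ Finset.univ.filter (fun i => b i = j), u i)
          (fun j : Fin N => ∑ i ∈ Finset.univ.filter (fun i => b i = j), v i))
        = (Finset.univ.filter (fun j => Odd (cnt b j))).card := by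
    intro b
    have hval : ∀ i : Fin d, u i - v i = if u i ≠ v i then (1 : ZMod 2) else 0 := by
      intro i
      have : ∀ a c : ZMod 2, a - c = if a ≠ c then (1 : ZMod 2) else 0 := by decide
      exact this (u i) (v i)
    have key : ∀ j : Fin N,
        ((∑ i ∈ Finset.univ.filter (fun i => b i = j), u i)
          ≠ (∑ i ∈ Finset.univ.filter (fun i => b i = j), v i)) ↔ Odd (cnt b j) := by
      intro j
      rw [← sub_ne_zero, ← Finset.sum_sub_distrib,
        Finset.sum_congr rfl (fun i _ => hval i), ← Finset.sum_filter,
        Finset.filter_filter, Finset.sum_const, nsmul_eq_mul, mul_one]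
      rw [Ne, ZMod.natCast_eq_zero_iff]
      simp only [hcnt, Nat.odd_iff]
      omega
    unfold hammingDist
    congr 1
    exact Finset.filter_congr (fun j _ => by simpa using key j)
  -- Step C : fiberwise signed sum
  have stepC : ∀ j : Fin N, ∑ b : Fin d → Fin N, (-1:ℝ) ^ (cnt b j)
      = ((N:ℝ) - 2) ^ ψ * (N:ℝ) ^ (d - ψ) := by
    intro j
    have h1 : ∀ b : Fin d → Fin N, (-1:ℝ) ^ (cnt b j)
        = ∏ i : Fin d, (if u i ≠ v i then (if b i = j then (-1:ℝ) else 1) else 1) := by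
      intro b
      have heq : ∀ i : Fin d,
          (if u i ≠ v i then (if b i = j then (-1:ℝ) else 1) else 1)
          = (if b i = j ∧ u i ≠ v i then (-1:ℝ) else 1) := by
        intro i; by_cases h1 : u i ≠ v i <;> by_cases h2 : b i = j <;> simp [h1, h2]
      rw [Finset.prod_congr rfl (fun i _ => heq i), Finset.prod_ite, Finset.prod_const,
        Finset.prod_const, one_pow, mul_one]
    rw [Finset.sum_congr rfl (fun b _ => h1 b),
      ← Fintype.prod_sum (fun i x => if u i ≠ v i then (if x = j then (-1:ℝ) else 1) else 1)]
    have h2 : ∀ i : Fin d,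
        (∑ x : Fin N, if u i ≠ v i then (if x = j then (-1:ℝ) else 1) else 1)
          = if u i ≠ v i then ((N:ℝ) - 2) else (N:ℝ) := by
      intro i
      have hsum2 : (∑ x : Fin N, if x = j then (-1:ℝ) else 1) = (N:ℝ) - 2 := by
        have : ∀ x : Fin N, (if x = j then (-1:ℝ) else 1) = 1 - (if x = j then (2:ℝ) else 0) := by
          intro x; split <;> ring
        simp [this, Finset.sum_ite_eq']
      by_cases h : u i ≠ v i <;> simp [h, hsum2, Finset.card_univ]
    rw [Finset.prod_congr rfl (fun i _ => h2 i), Finset.prod_ite, Finset.prod_const,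
      Finset.prod_const]
    have hcard1 : (Finset.univ.filter (fun i => u i ≠ v i)).card = ψ := rfl
    have hcard2 : (Finset.univ.filter (fun i => ¬ (u i ≠ v i))).card = d - ψ := by
      have := Finset.card_filter_add_card_filter_not
        (s := (Finset.univ : Finset (Fin d))) (p := fun i => u i ≠ v i)
      simp only [Finset.card_univ, Fintype.card_fin] at this
      omega
    rw [hcard1, hcard2]
  -- ψ ≤ d
  have hψd : ψ ≤ d := by
    have : ψ ≤ Fintype.card (Fin d) := hammingDist_le_card_fintype
    simpa using this
  -- total sum
  have hcardP : (Fintype.card (Fin d → Fin N) : ℝ) = (N:ℝ) ^ d := by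
    simp [Fintype.card_fun]
  have hsum : (∑ b : Fin d → Fin N,
        (hammingDist
          (fun j : Fin N => ∑ i ∈ Finset.univ.filter (fun i => b i = j), u i)
          (fun j : Fin N => ∑ i ∈ Finset.univ.filter (fun i => b i = j), v i) : ℝ))
      = (N:ℝ) * (((N:ℝ) ^ d - ((N:ℝ) - 2) ^ ψ * (N:ℝ) ^ (d - ψ)) / 2) := by
    have e1 : ∀ b : Fin d → Fin N,
        ((hammingDist
          (fun j : Fin N => ∑ i ∈ Finset.univ.filter (fun i => b i = j), u i)
          (fun j : Fin N => ∑ i ∈ Finset.univ.filter (fun i => b i = j), v i)) : ℝ)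
        = ∑ j : Fin N, (1 - (-1:ℝ) ^ (cnt b j)) / 2 := by
      intro b
      rw [stepA b]
      rw [← Finset.sum_boole]
      apply Finset.sum_congr rfl
      intro j _
      rcases Nat.even_or_odd (cnt b j) with h | h
      · rw [h.neg_one_pow]
        simp [Nat.not_odd_iff_even.mpr h]
      · rw [h.neg_one_pow]
        simp [h]
    rw [Finset.sum_congr rfl (fun b _ => e1 b), Finset.sum_comm]
    have e2 : ∀ j : Fin N, ∑ b : Fin d → Fin N, (1 - (-1:ℝ) ^ (cnt b j)) / 2
        = ((N:ℝ) ^ d - ((N:ℝ) - 2) ^ ψ * (N:ℝ) ^ (d - ψ)) / 2 := by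
      intro j
      rw [← Finset.sum_div, Finset.sum_sub_distrib, stepC j, Finset.sum_const,
        Finset.card_univ]
      norm_num [Fintype.card_fun]
    rw [Finset.sum_congr rfl (fun j _ => e2 j), Finset.sum_const, Finset.card_univ,
      Fintype.card_fin, nsmul_eq_mul]
  rw [hsum, hcardP]
  -- final arithmetic
  have hρ : (2:ℝ) ≤ (r:ℝ) := by exact_mod_cast hr
  have hρ0 : (0:ℝ) < (r:ℝ) := by linarith
  have hNr : (N:ℝ) = 8 * (r:ℝ) ^ 2 := by rw [hN]; push_cast; ring
  have hN0 : (0:ℝ) < (N:ℝ) := by nlinarith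
  have hx0 : (0:ℝ) ≤ 1 / (4 * (r:ℝ) ^ 2) := by positivity
  have hx1 : 1 / (4 * (r:ℝ) ^ 2) ≤ 1 := by
    rw [div_le_one (by positivity)]; nlinarith
  set a : ℝ := 1 - 1 / (4 * (r:ℝ) ^ 2) with had
  have ha0 : 0 ≤ a := by simp only [had]; linarith
  have ha1 : a ≤ 1 := by simp only [had]; linarith
  have hNa : (N:ℝ) - 2 = a * (N:ℝ) := by
    rw [had, hNr]; field_simp; ring
  have haψ : a ^ ψ ≤ a ^ (4 * r) := pow_le_pow_of_le_one ha0 ha1 hdist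
  have hq := one_sub_pow_le_quad (1 / (4 * (r:ℝ) ^ 2)) hx0 hx1 (4 * r)
  rw [← had] at hq
  have hqval : ((4 * r : ℕ) : ℝ) = 4 * (r:ℝ) := by push_cast; ring
  rw [hqval] at hq
  have hscale : 8 * (r:ℝ) ^ 2 *
      (1 - 4 * (r:ℝ) * (1 / (4 * (r:ℝ) ^ 2))
        + 4 * (r:ℝ) * (4 * (r:ℝ) - 1) / 2 * (1 / (4 * (r:ℝ) ^ 2)) ^ 2)
      = 8 * (r:ℝ) ^ 2 - 8 * (r:ℝ) + 4 - 1 / (r:ℝ) := by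
    field_simp; ring
  have hkey : 8 * (r:ℝ) ^ 2 * a ^ ψ ≤ 8 * (r:ℝ) ^ 2 - 8 * (r:ℝ) + 4 - 1 / (r:ℝ) := by
    calc 8 * (r:ℝ) ^ 2 * a ^ ψ ≤ 8 * (r:ℝ) ^ 2 * a ^ (4 * r) := by
          apply mul_le_mul_of_nonneg_left haψ; positivity
      _ ≤ 8 * (r:ℝ) ^ 2 * (1 - 4 * (r:ℝ) * (1 / (4 * (r:ℝ) ^ 2))
            + 4 * (r:ℝ) * (4 * (r:ℝ) - 1) / 2 * (1 / (4 * (r:ℝ) ^ 2)) ^ 2) := by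
          apply mul_le_mul_of_nonneg_left hq; positivity
      _ = _ := hscale
  -- reduce the goal
  have hpowψ : (0:ℝ) < (N:ℝ) ^ ψ := by positivity
  have hpowdψ : (0:ℝ) < (N:ℝ) ^ (d - ψ) := by positivity
  have hpowd : (0:ℝ) < (N:ℝ) ^ d := by positivity
  have hsplit : (N:ℝ) ^ d = (N:ℝ) ^ ψ * (N:ℝ) ^ (d - ψ) := by
    rw [← pow_add]; congr 1; omega
  rw [gt_iff_lt, lt_div_iff₀ hpowd]
  have hexp : ((N:ℝ) - 2) ^ ψ = a ^ ψ * (N:ℝ) ^ ψ := by rw [hNa, mul_pow]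
  rw [hexp, hsplit]
  have hinv : 1 / (r:ℝ) > 0 := by positivity
  have hfin : 4 * (r:ℝ) < (N:ℝ) * (1 - a ^ ψ) := by
    rw [hNr]
    nlinarith [hkey, hinv, hρ]
  calc 2 * (r:ℝ) * ((N:ℝ) ^ ψ * (N:ℝ) ^ (d - ψ))
      = (4 * (r:ℝ) * (N:ℝ) ^ ψ) * (N:ℝ) ^ (d - ψ) / 2 := by ring
    _ < ((N:ℝ) * (1 - a ^ ψ) * (N:ℝ) ^ ψ) * (N:ℝ) ^ (d - ψ) / 2 := by
        have h5 := mul_lt_mul_of_pos_right (mul_lt_mul_of_pos_right hfin hpowψ) hpowdψ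
        linarith
    _ = (N:ℝ) * ((N:ℝ) ^ ψ * (N:ℝ) ^ (d - ψ) - a ^ ψ * (N:ℝ) ^ ψ * (N:ℝ) ^ (d - ψ)) / 2 := by
        ring
    _ = (N:ℝ) * (((N:ℝ) ^ ψ * (N:ℝ) ^ (d - ψ) - a ^ ψ * (N:ℝ) ^ ψ * (N:ℝ) ^ (d - ψ)) / 2) := by
        ring
end

section
/- Any map f : {0,1}^d → {0,1}^k that, for some 0 < ε < 1, preserves Hamming distances up to a multiplicative factor (1 ± ε) among the zero vector e_0 and the n standard unit vectors e_1, ..., e_n (n ≤ d) must satisfy Σ_{m=0}^{⌊1+ε⌋} C(k, m) ≥ n; in particular k = Ω(n^{1/(1+ε)}). -/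
open Finset

/-- Any binary-to-binary map `f : {0,1}^d → {0,1}^k` preserving Hamming distances up to a
factor `(1 ± ε)` among the zero vector and the `n` standard unit vectors must satisfy
`∑_{m=0}^{⌊1+ε⌋} C(k, m) ≥ n`. -/
theorem binary_to_binary_lower_bound (d k n : ℕ) (hn : n ≤ d) (ε : ℝ)
    (hε0 : 0 < ε) (hε1 : ε < 1)
    (f : (Fin d → Bool) → (Fin k → Bool))
    (e0 : Fin d → Bool) (e : Fin n → Fin d → Bool)
    (he0 : e0 = fun _ => false)
    (he : ∀ i : Fin n, e i = fun x : Fin d => decide ((x : ℕ) = (i : ℕ)))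
    (h1 : ∀ i : Fin n,
      (1 - ε) * (hammingDist e0 (e i) : ℝ) ≤ (hammingDist (f e0) (f (e i)) : ℝ) ∧
      (hammingDist (f e0) (f (e i)) : ℝ) ≤ (1 + ε) * (hammingDist e0 (e i) : ℝ))
    (h2 : ∀ i j : Fin n, i ≠ j →
      (1 - ε) * (hammingDist (e i) (e j) : ℝ) ≤ (hammingDist (f (e i)) (f (e j)) : ℝ) ∧
      (hammingDist (f (e i)) (f (e j)) : ℝ) ≤ (1 + ε) * (hammingDist (e i) (e j) : ℝ)) :
    n ≤ ∑ m ∈ Finset.range (⌊(1 : ℝ) + ε⌋₊ + 1), k.choose m := by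
  classical
  -- floor computation
  have hfloor : ⌊(1 : ℝ) + ε⌋₊ = 1 := by
    rw [Nat.floor_eq_iff (by linarith)]
    push_cast
    constructor <;> linarith
  rw [hfloor]
  have hrhs : ∑ m ∈ Finset.range 2, k.choose m = k + 1 := by
    simp [Finset.sum_range_succ, Nat.add_comm]
  rw [hrhs]
  -- distance from e0 to e i is 1
  have hd0 : ∀ i : Fin n, hammingDist e0 (e i) = 1 := by
    intro i
    rw [he0, he i]
    have : ({x : Fin d | (fun _ => false) x ≠ decide ((x : ℕ) = (i : ℕ))} : Finset (Fin d))
        = {⟨(i : ℕ), lt_of_lt_of_le i.2 hn⟩} := by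
      ext x
      simp [Fin.ext_iff, eq_comm]
    rw [hammingDist, this, Finset.card_singleton]
  -- e i are pairwise distinct
  have hene : ∀ i j : Fin n, i ≠ j → e i ≠ e j := by
    intro i j hij hcontra
    apply hij
    have := congrFun hcontra ⟨(i : ℕ), lt_of_lt_of_le i.2 hn⟩
    rw [he i, he j] at this
    simp at this
    exact Fin.ext this
  -- f images are distinct
  have hfne : ∀ i j : Fin n, i ≠ j → f (e i) ≠ f (e j) := by
    intro i j hij hcontra
    have hz : hammingDist (f (e i)) (f (e j)) = 0 := by rw [hcontra, hammingDist_self]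
    have h := (h2 i j hij).1
    rw [hz] at h
    push_cast at h
    have hp : 0 < (hammingDist (e i) (e j) : ℝ) := by
      exact_mod_cast hammingDist_pos.2 (hene i j hij)
    nlinarith
  -- each f (e i) within distance 1 of f e0
  have hclose : ∀ i : Fin n, hammingDist (f e0) (f (e i)) ≤ 1 := by
    intro i
    have h := (h1 i).2
    rw [hd0 i] at h
    have : (hammingDist (f e0) (f (e i)) : ℝ) < 2 := by push_cast at h ⊢; linarith
    have := (Nat.cast_lt (α := ℝ)).1 (by exact_mod_cast this : (hammingDist (f e0) (f (e i)) : ℝ) < (2 : ℕ))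
    omega
  -- the differing set has card ≤ 1
  set s : Fin n → Finset (Fin k) := fun i => {x : Fin k | f e0 x ≠ f (e i) x} with hs
  have hscard : ∀ i, (s i).card ≤ 1 := fun i => hclose i
  have hkey : ∀ i j : Fin n, s i = s j → f (e i) = f (e j) := by
    intro i j hseq
    funext x
    by_cases hx : x ∈ s i
    · have hxj : x ∈ s j := hseq ▸ hx
      have h1' : f e0 x ≠ f (e i) x := by simpa [hs] using hx
      have h2' : f e0 x ≠ f (e j) x := by simpa [hs] using hxj
      revert h1' h2'
      cases f e0 x <;> cases f (e i) x <;> cases f (e j) x <;> simp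
    · have hxj : x ∉ s j := hseq ▸ hx
      have h1' : f e0 x = f (e i) x := by simpa [hs] using hx
      have h2' : f e0 x = f (e j) x := by simpa [hs] using hxj
      rw [← h1', h2']
  -- injection Fin n → Option (Fin k)
  have hinj : ∃ g : Fin n → Option (Fin k), Function.Injective g := by
    refine ⟨fun i => if hc : (s i).card = 1 then some (Finset.card_eq_one.1 hc).choose else none, ?_⟩
    intro i j hij
    dsimp only at hij
    by_cases hci : (s i).card = 1 <;> by_cases hcj : (s j).card = 1
    · rw [dif_pos hci, dif_pos hcj] at hij
      have hi' := (Finset.card_eq_one.1 hci).choose_spec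
      have hj' := (Finset.card_eq_one.1 hcj).choose_spec
      by_contra hne'
      exact hfne i j hne' (hkey i j (by rw [hi', hj', Option.some_inj.1 hij]))
    · rw [dif_pos hci, dif_neg hcj] at hij; exact absurd hij (by simp)
    · rw [dif_neg hci, dif_pos hcj] at hij; exact absurd hij (by simp)
    · have hi0 : (s i).card = 0 := by have := hscard i; omega
      have hj0 : (s j).card = 0 := by have := hscard j; omega
      by_contra hne'
      exact hfne i j hne' (hkey i j (by rw [Finset.card_eq_zero.1 hi0, Finset.card_eq_zero.1 hj0]))
  obtain ⟨g, hg⟩ := hinj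
  calc n = Fintype.card (Fin n) := (Fintype.card_fin n).symm
    _ ≤ Fintype.card (Option (Fin k)) := Fintype.card_le_of_injective g hg
    _ = k + 1 := by simp
end

section
/- Let u, v ∈ {0,1}^d share at most 2ψ active positions and be compressed by BCS with N uniformly random independent bucket assignments. For any integer m ≥ 1, the probability that at least 2m active positions are involved in collisions within m distinct buckets (i.e., at least m disjoint pairs of active positions are co-located) is at most (2ψ)^{2m}/N^m. -/
open Finset
open scoped Classical

/-- If `u, v` share at most `2ψ` active positions, then under a uniformly random
independent bucket assignment into `N` buckets, the probability that at least `m`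
disjoint pairs of active positions are co-located (within `m` distinct buckets) is at
most `(2ψ)^{2m}/N^m`. -/
theorem bcs_many_collisions_prob (d N ψ m : ℕ) (hN : 1 ≤ N) (hm : 1 ≤ m)
    (u v : Fin d → ZMod 2)
    (hact : (Finset.univ.filter (fun i : Fin d => u i = 1 ∨ v i = 1)).card ≤ 2 * ψ) :
    ((Finset.univ.filter (fun b : Fin d → Fin N =>
        ∃ p : Fin m → Fin d × Fin d,
          Function.Injective
            (fun x : Fin m × Bool => if x.2 then (p x.1).1 else (p x.1).2) ∧
          (∀ t : Fin m,
            (u (p t).1 = 1 ∨ v (p t).1 = 1) ∧ (u (p t).2 = 1 ∨ v (p t).2 = 1)) ∧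
          (∀ t : Fin m, b (p t).1 = b (p t).2) ∧
          (∀ s t : Fin m, s ≠ t → b (p s).1 ≠ b (p t).1))).card : ℝ) /
      (Fintype.card (Fin d → Fin N) : ℝ) ≤
    (2 * (ψ : ℝ)) ^ (2 * m) / (N : ℝ) ^ m := by
  classical
  set A : Finset (Fin d) := Finset.univ.filter (fun i => u i = 1 ∨ v i = 1) with hA
  set P : Finset (Fin m → Fin d × Fin d) :=
    Finset.univ.filter (fun p =>
      Function.Injective
        (fun x : Fin m × Bool => if x.2 then (p x.1).1 else (p x.1).2) ∧
      ∀ t, (p t).1 ∈ A ∧ (p t).2 ∈ A) with hP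
  set Bad : Finset (Fin d → Fin N) :=
    Finset.univ.filter (fun b : Fin d → Fin N =>
        ∃ p : Fin m → Fin d × Fin d,
          Function.Injective
            (fun x : Fin m × Bool => if x.2 then (p x.1).1 else (p x.1).2) ∧
          (∀ t : Fin m,
            (u (p t).1 = 1 ∨ v (p t).1 = 1) ∧ (u (p t).2 = 1 ∨ v (p t).2 = 1)) ∧
          (∀ t : Fin m, b (p t).1 = b (p t).2) ∧
          (∀ s t : Fin m, s ≠ t → b (p s).1 ≠ b (p t).1)) with hBad
  -- T p : assignments satisfying collision constraints for p
  set T : (Fin m → Fin d × Fin d) → Finset (Fin d → Fin N) :=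
    fun p => Finset.univ.filter (fun b => ∀ t, b (p t).1 = b (p t).2) with hT
  have hsub : Bad ⊆ P.biUnion T := by
    intro b hb
    rw [hBad, Finset.mem_filter] at hb
    obtain ⟨-, p, hinj, hactp, hcol, -⟩ := hb
    refine Finset.mem_biUnion.2 ⟨p, ?_, ?_⟩
    · rw [hP, Finset.mem_filter]
      refine ⟨Finset.mem_univ _, hinj, fun t => ?_⟩
      simp only [hA, Finset.mem_filter, Finset.mem_univ, true_and]
      exact hactp t
    · rw [hT]; simp only [Finset.mem_filter, Finset.mem_univ, true_and]
      exact hcol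
  -- count T p for p ∈ P
  have hTcard : ∀ p ∈ P, (T p).card * N ^ m ≤ N ^ d := by
    intro p hp
    rw [hP, Finset.mem_filter] at hp
    obtain ⟨-, hinj, -⟩ := hp
    have hL : ∀ s t : Fin m, (p s).1 = (p t).1 → s = t := by
      intro s t h
      have := hinj (a₁ := (s, true)) (a₂ := (t, true)) (by simpa using h)
      simpa using this
    have hLR : ∀ s t : Fin m, (p s).1 ≠ (p t).2 := by
      intro s t h
      have := hinj (a₁ := (s, true)) (a₂ := (t, false)) (by simpa using h)
      simp at this
    set f : (Fin d → Fin N) × (Fin m → Fin N) → (Fin d → Fin N) :=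
      fun bc i => if h : ∃ t, (p t).1 = i then bc.2 h.choose else bc.1 i with hf
    have hfval : ∀ bc : (Fin d → Fin N) × (Fin m → Fin N), ∀ t, f bc ((p t).1) = bc.2 t := by
      intro bc t
      have h : ∃ s, (p s).1 = (p t).1 := ⟨t, rfl⟩
      rw [hf]
      simp only [dif_pos h]
      rw [hL h.choose t h.choose_spec]
    have hfoff : ∀ bc : (Fin d → Fin N) × (Fin m → Fin N), ∀ i,
        (¬ ∃ t, (p t).1 = i) → f bc i = bc.1 i := by
      intro bc i h
      rw [hf]; exact dif_neg h
    have hinjOn : Set.InjOn f ((T p ×ˢ (Finset.univ : Finset (Fin m → Fin N)) : Finset _) : Set _) := by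
      rintro ⟨b₁, c₁⟩ h₁ ⟨b₂, c₂⟩ h₂ heq
      simp only [Finset.mem_coe, Finset.mem_product, hT, Finset.mem_filter] at h₁ h₂
      have hb₁ := h₁.1.2
      have hb₂ := h₂.1.2
      have hc : c₁ = c₂ := by
        funext t
        have := congrFun heq ((p t).1)
        rwa [hfval, hfval] at this
      have hb : b₁ = b₂ := by
        funext i
        by_cases h : ∃ t, (p t).1 = i
        · obtain ⟨t, rfl⟩ := h
          have hne : ¬ ∃ s, (p s).1 = (p t).2 := by
            rintro ⟨s, hs⟩; exact hLR s t hs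
          have e1 : b₁ (p t).1 = f (b₁, c₁) ((p t).2) := by
            rw [hfoff _ _ hne]; exact hb₁ t
          have e2 : b₂ (p t).1 = f (b₂, c₂) ((p t).2) := by
            rw [hfoff _ _ hne]; exact hb₂ t
          rw [e1, e2, heq]
        · have e0 := congrFun heq i
          rw [hfoff (b₁, c₁) i h, hfoff (b₂, c₂) i h] at e0
          exact e0
      rw [hb, hc]
    have := Finset.card_le_card_of_injOn f
      (s := (T p) ×ˢ (Finset.univ : Finset (Fin m → Fin N)))
      (t := (Finset.univ : Finset (Fin d → Fin N)))
      (fun _ _ => Finset.mem_univ _) hinjOn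
    rw [Finset.card_product, Finset.card_univ, Finset.card_univ] at this
    simpa [Fintype.card_fun] using this
  -- count P
  have hPcard : P.card ≤ (2 * ψ) ^ (2 * m) := by
    have hsubP : P ⊆ Fintype.piFinset (fun _ : Fin m => A ×ˢ A) := by
      intro p hp
      rw [hP, Finset.mem_filter] at hp
      rw [Fintype.mem_piFinset]
      intro t
      exact Finset.mk_mem_product (hp.2.2 t).1 (hp.2.2 t).2
    calc P.card ≤ (Fintype.piFinset (fun _ : Fin m => A ×ˢ A)).card :=
          Finset.card_le_card hsubP
      _ = (A.card * A.card) ^ m := by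
          rw [Fintype.card_piFinset]
          simp [Finset.card_product]
      _ ≤ ((2 * ψ) * (2 * ψ)) ^ m := by
          exact Nat.pow_le_pow_left (Nat.mul_le_mul hact hact) m
      _ = (2 * ψ) ^ (2 * m) := by rw [pow_mul, sq]
  -- combine in ℕ
  have hmain : Bad.card * N ^ m ≤ (2 * ψ) ^ (2 * m) * N ^ d := by
    calc Bad.card * N ^ m ≤ (P.biUnion T).card * N ^ m := by
          exact Nat.mul_le_mul_right _ (Finset.card_le_card hsub)
      _ ≤ (∑ p ∈ P, (T p).card) * N ^ m :=
          Nat.mul_le_mul_right _ (Finset.card_biUnion_le)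
      _ = ∑ p ∈ P, (T p).card * N ^ m := by rw [Finset.sum_mul]
      _ ≤ ∑ p ∈ P, N ^ d := Finset.sum_le_sum hTcard
      _ = P.card * N ^ d := by rw [Finset.sum_const, smul_eq_mul]
      _ ≤ (2 * ψ) ^ (2 * m) * N ^ d := Nat.mul_le_mul_right _ hPcard
  -- pass to ℝ
  have hNd : (0 : ℝ) < (N : ℝ) ^ d := by positivity
  have hNm : (0 : ℝ) < (N : ℝ) ^ m := by positivity
  have hcast : (Bad.card : ℝ) * (N : ℝ) ^ m ≤ (2 * (ψ : ℝ)) ^ (2 * m) * (N : ℝ) ^ d := by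
    exact_mod_cast hmain
  rw [Fintype.card_fun, Fintype.card_fin, Fintype.card_fin]
  push_cast
  rw [div_le_div_iff₀ hNd hNm]
  exact hcast
end

section
/- Let u, v ∈ {0,1}^d and let b : {1,...,d} → {1,...,N} be any bucket assignment under which the compressed vectors u', v' share exactly c corrupted buckets (buckets receiving ≥ 2 active positions). Then |d_H(u', v') - d_H(u, v)| ≤ 2·(number of active positions in corrupted buckets) and in particular d_H(u, v) - d_H(u', v') is at most the number of unmatched positions lying in corrupted buckets. -/
open Finset

/-- The deviation of the compressed Hamming distance from the original one is controlled
by the corrupted buckets: it is at most twice the number of active positions lying in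
corrupted buckets, and `d_H(u,v) - d_H(u',v')` is at most the number of unmatched
positions lying in corrupted buckets. -/
theorem bcs_deviation_bounded_by_corruption (d N : ℕ) (u v : Fin d → ZMod 2)
    (b : Fin d → Fin N) :
    |(hammingDist
        (fun j : Fin N => ∑ i ∈ Finset.univ.filter (fun i => b i = j), u i)
        (fun j : Fin N => ∑ i ∈ Finset.univ.filter (fun i => b i = j), v i) : ℤ) -
      (hammingDist u v : ℤ)| ≤
      2 * ((Finset.univ.filter (fun i : Fin d => (u i = 1 ∨ v i = 1) ∧
        2 ≤ (Finset.univ.filter (fun i' : Fin d =>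
          b i' = b i ∧ (u i' = 1 ∨ v i' = 1))).card)).card : ℤ) ∧
    (hammingDist u v : ℤ) -
      (hammingDist
        (fun j : Fin N => ∑ i ∈ Finset.univ.filter (fun i => b i = j), u i)
        (fun j : Fin N => ∑ i ∈ Finset.univ.filter (fun i => b i = j), v i) : ℤ) ≤
      ((Finset.univ.filter (fun i : Fin d => u i ≠ v i ∧
        2 ≤ (Finset.univ.filter (fun i' : Fin d =>
          b i' = b i ∧ (u i' = 1 ∨ v i' = 1))).card)).card : ℤ) := by
  classical
  -- notation
  set m : Fin N → ℕ := fun j => (Finset.univ.filter (fun i => b i = j ∧ u i ≠ v i)).card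
    with hm
  set a : Fin N → ℕ :=
    fun j => (Finset.univ.filter (fun i : Fin d => b i = j ∧ (u i = 1 ∨ v i = 1))).card with ha
  -- unmatched implies active
  have unm_act : ∀ i, u i ≠ v i → (u i = 1 ∨ v i = 1) := by
    intro i
    revert i
    intro i
    have : ∀ x y : ZMod 2, x ≠ y → (x = 1 ∨ y = 1) := by decide
    exact this (u i) (v i)
  -- m j ≤ a j
  have hma : ∀ j, m j ≤ a j := by
    intro j
    apply Finset.card_le_card
    intro i hi
    simp only [mem_filter, mem_univ, true_and] at hi ⊢
    exact ⟨hi.1, unm_act i hi.2⟩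
  -- original hamming distance as fiberwise sum
  have hD : hammingDist u v = ∑ j, m j := by
    rw [hammingDist]
    rw [Finset.card_eq_sum_card_fiberwise (f := b) (t := Finset.univ)
      (fun x _ => mem_univ _)]
    refine Finset.sum_congr rfl fun j _ => ?_
    rw [hm, Finset.filter_filter]
    congr 1
    ext i
    simp [and_comm]
  -- parity characterization of compressed mismatch
  have hpar : ∀ j : Fin N,
      ((∑ i ∈ Finset.univ.filter (fun i => b i = j), u i) ≠
        ∑ i ∈ Finset.univ.filter (fun i => b i = j), v i) ↔ ¬ (2 ∣ m j) := by
    intro j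
    have hsum : (∑ i ∈ Finset.univ.filter (fun i => b i = j), u i) -
        (∑ i ∈ Finset.univ.filter (fun i => b i = j), v i) = (m j : ZMod 2) := by
      rw [← Finset.sum_sub_distrib]
      have h1 : ∑ i ∈ (Finset.univ.filter (fun i => b i = j)).filter
          (fun i => u i ≠ v i), (u i - v i)
          = ∑ i ∈ Finset.univ.filter (fun i => b i = j), (u i - v i) := by
        apply Finset.sum_filter_of_ne
        intro x _ hx
        exact fun h => hx (by rw [h, sub_self])
      rw [← h1]
      have h2 : ∀ i ∈ (Finset.univ.filter (fun i => b i = j)).filter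
          (fun i => u i ≠ v i), u i - v i = 1 := by
        intro i hi
        simp only [mem_filter] at hi
        have : ∀ x y : ZMod 2, x ≠ y → x - y = 1 := by decide
        exact this _ _ hi.2
      rw [Finset.sum_congr rfl h2, Finset.sum_const, nsmul_eq_mul, mul_one]
      congr 1
      rw [Finset.filter_filter]
    constructor
    · intro hne hdvd
      apply hne
      have : (m j : ZMod 2) = 0 := (ZMod.natCast_eq_zero_iff _ _).2 hdvd
      rw [this] at hsum
      exact sub_eq_zero.mp hsum
    · intro hnd hne
      apply hnd
      rw [← ZMod.natCast_eq_zero_iff, ← hsum, sub_eq_zero]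
      exact hne
  -- compressed hamming distance
  have hD' : hammingDist
        (fun j : Fin N => ∑ i ∈ Finset.univ.filter (fun i => b i = j), u i)
        (fun j : Fin N => ∑ i ∈ Finset.univ.filter (fun i => b i = j), v i)
      = ∑ j, (if 2 ∣ m j then 0 else 1) := by
    rw [hammingDist]
    have heq : Finset.univ.filter (fun j : Fin N =>
        (∑ i ∈ Finset.univ.filter (fun i => b i = j), u i) ≠
          ∑ i ∈ Finset.univ.filter (fun i => b i = j), v i)
        = Finset.univ.filter (fun j => ¬ (2 ∣ m j)) := by
      apply Finset.filter_congr
      intro j _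
      simpa using hpar j
    rw [heq, Finset.card_filter]
    refine Finset.sum_congr rfl fun j _ => ?_
    by_cases h : 2 ∣ m j <;> simp [h]
  -- M_c as fiberwise sum
  have hMc : (Finset.univ.filter (fun i : Fin d => u i ≠ v i ∧
        2 ≤ (Finset.univ.filter (fun i' : Fin d =>
          b i' = b i ∧ (u i' = 1 ∨ v i' = 1))).card)).card
      = ∑ j, (if 2 ≤ a j then m j else 0) := by
    rw [Finset.card_eq_sum_card_fiberwise (f := b) (t := Finset.univ)
      (fun x _ => mem_univ _)]
    refine Finset.sum_congr rfl fun j _ => ?_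
    by_cases hc : 2 ≤ a j
    · simp only [hc, if_true, hm]
      congr 1
      ext i
      simp only [Finset.mem_filter, Finset.mem_univ, true_and]
      constructor
      · rintro ⟨⟨h1, _⟩, h2⟩
        exact ⟨h2, h1⟩
      · rintro ⟨h2, h1⟩
        refine ⟨⟨h1, ?_⟩, h2⟩
        rw [h2]
        exact hc
    · simp only [hc, if_false]
      rw [Finset.card_eq_zero, Finset.filter_eq_empty_iff]
      intro i hi hbi
      simp only [Finset.mem_filter, Finset.mem_univ, true_and] at hi
      rw [hbi] at hi
      exact hc hi.2
  -- A_c as fiberwise sum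
  have hAc : (Finset.univ.filter (fun i : Fin d => (u i = 1 ∨ v i = 1) ∧
        2 ≤ (Finset.univ.filter (fun i' : Fin d =>
          b i' = b i ∧ (u i' = 1 ∨ v i' = 1))).card)).card
      = ∑ j, (if 2 ≤ a j then a j else 0) := by
    rw [Finset.card_eq_sum_card_fiberwise (f := b) (t := Finset.univ)
      (fun x _ => mem_univ _)]
    refine Finset.sum_congr rfl fun j _ => ?_
    by_cases hc : 2 ≤ a j
    · rw [if_pos hc]
      simp only [ha]
      congr 1
      ext i
      simp only [Finset.mem_filter, Finset.mem_univ, true_and]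
      constructor
      · rintro ⟨⟨h1, _⟩, h2⟩
        exact ⟨h2, h1⟩
      · rintro ⟨h2, h1⟩
        refine ⟨⟨h1, ?_⟩, h2⟩
        rw [h2]
        exact hc
    · simp only [hc, if_false]
      rw [Finset.card_eq_zero, Finset.filter_eq_empty_iff]
      intro i hi hbi
      simp only [Finset.mem_filter, Finset.mem_univ, true_and] at hi
      rw [hbi] at hi
      exact hc hi.2
  -- D' ≤ D
  have hle : (∑ j, (if 2 ∣ m j then 0 else 1)) ≤ ∑ j, m j := by
    apply Finset.sum_le_sum
    intro j _
    by_cases h : 2 ∣ m j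
    · simp [h]
    · simp only [h, if_false]
      rcases Nat.eq_zero_or_pos (m j) with h0 | h0
      · exact absurd (h0 ▸ dvd_zero 2) h
      · exact h0
  -- D ≤ D' + M_c
  have hkey : (∑ j, m j) ≤ (∑ j, (if 2 ∣ m j then 0 else 1))
      + ∑ j, (if 2 ≤ a j then m j else 0) := by
    rw [← Finset.sum_add_distrib]
    apply Finset.sum_le_sum
    intro j _
    by_cases hc : 2 ≤ a j
    · by_cases h : 2 ∣ m j <;> simp [h, hc]
    · have ham : m j ≤ 1 := le_trans (hma j) (by omega)
      interval_cases hmj : m j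
      · simp
      · norm_num
  -- M_c ≤ A_c
  have hMA : (∑ j, (if 2 ≤ a j then m j else 0)) ≤ ∑ j, (if 2 ≤ a j then a j else 0) := by
    apply Finset.sum_le_sum
    intro j _
    split
    · exact hma j
    · exact le_refl 0
  rw [hD, hD', hMc, hAc]
  have h1 := hkey
  have h2 := hMA
  have h3 := hle
  constructor
  · rw [abs_le]
    constructor <;> omega
  · omega
end
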